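/- Let T₁ : V → W and T₂ : U → V be linear maps. Then there exist linear maps G₁ : W → V and G₂ : V → U with T₁G₁T₁ = T₁, G₁T₁G₁ = G₁, T₂G₂T₂ = T₂, G₂T₂G₂ = G₂, such that G₂G₁ satisfies (T₁T₂)(G₂G₁)(T₁T₂) = T₁T₂ and (G₂G₁)(T₁T₂)(G₂G₁) = G₂G₁. -/

import Mathlib

open Submodule LinearMap

/-- Coercion version of projection applied to an element of the target. -/
private lemma proj_left' {F E : Type*} [Field F] [AddCommGroup E] [Module F E]
    {p q : Submodule F E} (h : IsCompl p q) (x : E) (hx : x ∈ p) :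
    ((p.linearProjOfIsCompl q h x : p) : E) = x :=
  congrArg Subtype.val (Submodule.linearProjOfIsCompl_apply_left h ⟨x, hx⟩)

/-- Extend a subspace disjoint from `X` to a complement of `X`, keeping track of the piece added. -/
private lemma ext_compl {F E : Type*} [Field F] [AddCommGroup E] [Module F E]
    (X Y : Submodule F E) (h : X ⊓ Y = ⊥) :
    ∃ N P : Submodule F E, IsCompl X N ∧ N = Y ⊔ P ∧ (X ⊔ Y) ⊓ P = ⊥ := by
  obtain ⟨P, hP⟩ := (X ⊔ Y).exists_isCompl
  have hPd : (X ⊔ Y) ⊓ P = ⊥ := disjoint_iff.1 hP.disjoint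
  refine ⟨Y ⊔ P, P, ⟨?_, ?_⟩, rfl, hPd⟩
  · rw [disjoint_iff]
    have h1 : (Y ⊔ P) ⊓ (X ⊔ Y) = Y := by
      rw [sup_inf_assoc_of_le P (le_sup_right : Y ≤ X ⊔ Y), inf_comm, hPd, sup_bot_eq]
    have h2 : X ⊓ (Y ⊔ P) ≤ X ⊓ Y := by
      refine le_inf inf_le_left ?_
      have : X ⊓ (Y ⊔ P) ≤ (X ⊔ Y) ⊓ (Y ⊔ P) := inf_le_inf_right _ le_sup_left
      rw [inf_comm (X ⊔ Y), h1] at this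
      exact this
    exact le_bot_iff.1 (h ▸ h2)
  · rw [codisjoint_iff, ← sup_assoc]
    exact codisjoint_iff.1 hP.codisjoint

/-- Existence of a reflexive generalized inverse adapted to given complements of the kernel
and of the range. -/
private lemma agi_helper {F V W : Type*} [Field F]
    [AddCommGroup V] [Module F V] [AddCommGroup W] [Module F W]
    (T : V →ₗ[F] W) (M : Submodule F V) (hM : IsCompl (LinearMap.ker T) M)
    (S : Submodule F W) (hS : IsCompl (LinearMap.range T) S) :
    ∃ G : W →ₗ[F] V,
      (∀ v : V, G (T v) = (M.linearProjOfIsCompl (LinearMap.ker T) hM.symm v : V)) ∧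
      (∀ w : W, T (G w) =
        ((LinearMap.range T).linearProjOfIsCompl S hS w : W)) ∧
      (∀ w : W, G w ∈ M) ∧
      (∀ s ∈ S, G s = 0) := by
  have hT : ∀ v : V, T ((M.linearProjOfIsCompl (LinearMap.ker T) hM.symm v : V)) = T v := by
    intro v
    have hd : ((LinearMap.ker T).linearProjOfIsCompl M hM v : V)
        + (M.linearProjOfIsCompl (LinearMap.ker T) hM.symm v : V) = v :=
      Submodule.projection_add_projection_eq_self hM v
    have hk : ((LinearMap.ker T).linearProjOfIsCompl M hM v : V) ∈ LinearMap.ker T :=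
      Submodule.coe_mem _
    calc T ((M.linearProjOfIsCompl (LinearMap.ker T) hM.symm v : V))
        = T ((LinearMap.ker T).linearProjOfIsCompl M hM v : V)
          + T ((M.linearProjOfIsCompl (LinearMap.ker T) hM.symm v : V)) := by
          rw [LinearMap.mem_ker.1 hk, zero_add]
      _ = T v := by rw [← map_add, hd]
  -- the bijection between M and range T
  let f : M →ₗ[F] LinearMap.range T :=
    LinearMap.codRestrict (LinearMap.range T) (T.domRestrict M)
      (fun m => LinearMap.mem_range_self T (m : V))
  have hf_inj : Function.Injective f := by
    intro m₁ m₂ hm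
    have : T (m₁ : V) = T (m₂ : V) := congrArg Subtype.val hm
    have hmem : ((m₁ : V) - (m₂ : V)) ∈ LinearMap.ker T ⊓ M := by
      refine ⟨?_, sub_mem m₁.2 m₂.2⟩
      simp [LinearMap.mem_ker, map_sub, this]
    rw [disjoint_iff.1 hM.disjoint] at hmem
    exact Subtype.ext (sub_eq_zero.1 hmem)
  have hf_surj : Function.Surjective f := by
    rintro ⟨y, v, rfl⟩
    refine ⟨M.linearProjOfIsCompl (LinearMap.ker T) hM.symm v, ?_⟩
    exact Subtype.ext (hT v)
  let e : M ≃ₗ[F] LinearMap.range T := LinearEquiv.ofBijective f ⟨hf_inj, hf_surj⟩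
  let π : W →ₗ[F] LinearMap.range T := (LinearMap.range T).linearProjOfIsCompl S hS
  refine ⟨M.subtype ∘ₗ (e.symm : LinearMap.range T →ₗ[F] M) ∘ₗ π, ?_, ?_, ?_, ?_⟩
  · intro v
    have hπ : π (T v) = ⟨T v, LinearMap.mem_range_self T v⟩ :=
      Submodule.linearProjOfIsCompl_apply_left hS ⟨T v, LinearMap.mem_range_self T v⟩
    simp only [LinearMap.comp_apply, Submodule.subtype_apply, hπ]
    congr 1
    exact (LinearEquiv.symm_apply_eq e).2 (Subtype.ext (hT v)).symm
  · intro w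
    simp only [LinearMap.comp_apply, Submodule.subtype_apply]
    have : f (e.symm (π w)) = π w := e.apply_symm_apply (π w)
    exact congrArg Subtype.val this
  · intro w
    simp only [LinearMap.comp_apply, Submodule.subtype_apply]
    exact Submodule.coe_mem _
  · intro s hs
    simp only [LinearMap.comp_apply, Submodule.subtype_apply]
    have : π s = 0 := Submodule.projectionOnto_apply_of_mem_right hS hs
    rw [this, map_zero, Submodule.coe_zero]

theorem exists_agis_reverse_order {F U V W : Type*} [Field F]
    [AddCommGroup U] [Module F U] [AddCommGroup V] [Module F V]
    [AddCommGroup W] [Module F W]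
    (T₁ : V →ₗ[F] W) (T₂ : U →ₗ[F] V) :
    ∃ (G₁ : W →ₗ[F] V) (G₂ : V →ₗ[F] U),
      T₁ ∘ₗ G₁ ∘ₗ T₁ = T₁ ∧ G₁ ∘ₗ T₁ ∘ₗ G₁ = G₁ ∧
      T₂ ∘ₗ G₂ ∘ₗ T₂ = T₂ ∧ G₂ ∘ₗ T₂ ∘ₗ G₂ = G₂ ∧
      (T₁ ∘ₗ T₂) ∘ₗ (G₂ ∘ₗ G₁) ∘ₗ (T₁ ∘ₗ T₂) = T₁ ∘ₗ T₂ ∧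
      (G₂ ∘ₗ G₁) ∘ₗ (T₁ ∘ₗ T₂) ∘ₗ (G₂ ∘ₗ G₁) = G₂ ∘ₗ G₁ := by
  classical
  set K₁ : Submodule F V := LinearMap.ker T₁ with hK₁
  set R₂ : Submodule F V := LinearMap.range T₂ with hR₂
  set A : Submodule F V := K₁ ⊓ R₂ with hA
  -- complement C of A inside R₂
  obtain ⟨C', hC'⟩ := A.exists_isCompl
  set C : Submodule F V := C' ⊓ R₂ with hC
  have hCR : C ≤ R₂ := inf_le_right
  have hAC : A ⊔ C = R₂ := by
    have := sup_inf_assoc_of_le (x := A) C' (inf_le_right : A ≤ R₂)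
    rw [codisjoint_iff.1 hC'.codisjoint, top_inf_eq] at this
    exact this.symm
  have hKC : K₁ ⊓ C = ⊥ := by
    have h1 : K₁ ⊓ C = A ⊓ C' := by
      rw [hC, hA, inf_comm C' R₂, ← inf_assoc]
    rw [h1, ← disjoint_iff.1 hC'.disjoint]
  -- complement M of K₁ containing C, with extra piece P
  obtain ⟨M, P, hM, hMP, hKCP⟩ := ext_compl K₁ C hKC
  have hCM : C ≤ M := hMP ▸ le_sup_left
  have hRP : R₂ ⊓ P = ⊥ := by
    have hle : R₂ ≤ K₁ ⊔ C := by
      rw [← hAC]; exact sup_le (le_trans inf_le_left le_sup_left) le_sup_right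
    exact le_bot_iff.1 (hKCP ▸ inf_le_inf_right P hle)
  -- complement N of R₂ containing P
  obtain ⟨N, Q, hN, hNQ, _⟩ := ext_compl R₂ P hRP
  have hPN : P ≤ N := hNQ ▸ le_sup_left
  -- complements needed for the generalized inverses
  obtain ⟨S₁, hS₁⟩ := (LinearMap.range T₁).exists_isCompl
  obtain ⟨E, hE⟩ := (LinearMap.ker T₂).exists_isCompl
  obtain ⟨G₁, g1_proj, g1_T, g1_mem, _⟩ := agi_helper T₁ M hM S₁ hS₁
  obtain ⟨G₂, g2_proj, g2_T, g2_mem, g2_zero⟩ := agi_helper T₂ E hE N hN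
  refine ⟨G₁, G₂, ?_, ?_, ?_, ?_, ?_, ?_⟩
  · ext v
    simp only [LinearMap.comp_apply]
    rw [g1_T]
    exact proj_left' hS₁ (T₁ v) (LinearMap.mem_range_self T₁ v)
  · ext w
    simp only [LinearMap.comp_apply]
    rw [g1_proj]
    exact proj_left' hM.symm (G₁ w) (g1_mem w)
  · ext u
    simp only [LinearMap.comp_apply]
    rw [g2_T]
    exact proj_left' hN (T₂ u) (LinearMap.mem_range_self T₂ u)
  · ext v
    simp only [LinearMap.comp_apply]
    rw [g2_proj]
    exact proj_left' hE.symm (G₂ v) (g2_mem v)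
  · ext u
    simp only [LinearMap.comp_apply]
    -- decompose T₂ u = a + c with a ∈ A, c ∈ C
    have hmem : T₂ u ∈ A ⊔ C := by rw [hAC]; exact LinearMap.mem_range_self T₂ u
    obtain ⟨a, ha, c, hc, hac⟩ := Submodule.mem_sup.1 hmem
    have haK : a ∈ K₁ := (inf_le_left : A ≤ K₁) ha
    -- G₁ (T₁ (T₂ u)) = c
    have h1 : G₁ (T₁ (T₂ u)) = c := by
      rw [g1_proj]
      have hz : M.linearProjOfIsCompl (LinearMap.ker T₁) hM.symm a = 0 :=
        Submodule.projectionOnto_apply_of_mem_right hM.symm haK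
      rw [← hac, map_add, Submodule.coe_add,
        hz,
        Submodule.coe_zero, zero_add]
      exact proj_left' hM.symm c (hCM hc)
    rw [h1]
    have h2 : T₂ (G₂ c) = c := by
      rw [g2_T]; exact proj_left' hN c (hCR hc)
    rw [h2]
    have : T₁ (T₂ u) = T₁ c := by
      rw [← hac, map_add, LinearMap.mem_ker.1 haK, zero_add]
    rw [this]
  · ext w
    simp only [LinearMap.comp_apply]
    -- decompose G₁ w = c + p with c ∈ C, p ∈ P
    have hmem : G₁ w ∈ C ⊔ P := hMP ▸ g1_mem w
    obtain ⟨c, hc, p, hp, hcp⟩ := Submodule.mem_sup.1 hmem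
    have h0 : G₂ (G₁ w) = G₂ c := by
      rw [← hcp, map_add, g2_zero p (hPN hp), add_zero]
    rw [h0]
    have h2 : T₂ (G₂ c) = c := by
      rw [g2_T]; exact proj_left' hN c (hCR hc)
    rw [h2]
    have h3 : G₁ (T₁ c) = c := by
      rw [g1_proj]; exact proj_left' hM.symm c (hCM hc)
    rw [h3]
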